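/- Assume Q − Iₙ is positive semidefinite. Let K ∈ ℝ^{m×n} be stabilizing, let P be the unique symmetric solution of (A − BK)ᵀP + P(A − BK) + Q + KᵀRK = 0, and assume 𝒜(P) = A − B R⁻¹ Bᵀ P is Hurwitz. Let H be the unique solution of 𝒜(P)ᵀH + H𝒜(P) = −Iₙ. Then H is positive definite and P − H is positive semidefinite; in particular ‖H‖_F ≤ ‖P‖_F. -/

import Mathlib

open Matrix MeasureTheory Filter NormedSpace
open scoped Kronecker

noncomputable section

/-- A real square matrix is Hurwitz if every eigenvalue over `ℂ` has negative real part. -/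
def IsHurwitz {n : Type*} [Fintype n] [DecidableEq n] (X : Matrix n n ℝ) : Prop :=
  ∀ μ ∈ spectrum ℂ (X.map (algebraMap ℝ ℂ)), μ.re < 0

/-- The Frobenius norm of a real matrix. -/
def frobNorm {p q : Type*} [Fintype p] [Fintype q] (X : Matrix p q ℝ) : ℝ :=
  Real.sqrt (∑ i, ∑ j, (X i j) ^ 2)

/-- The spectral (ℓ²-operator) norm of a real matrix. -/
def spec2Norm {p q : Type*} [Fintype p] [Fintype q] [DecidableEq q] (X : Matrix p q ℝ) : ℝ :=
  ‖LinearMap.toContinuousLinearMap (Matrix.toEuclideanLin X)‖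

attribute [local instance] Matrix.normedAddCommGroup Matrix.normedSpace

lemma isUnitMapIffAux (M : Matrix (Fin n) (Fin n) ℝ) :
    IsUnit (M.map (algebraMap ℝ ℂ)) ↔ IsUnit M := by
  have : M.map (algebraMap ℝ ℂ) = (algebraMap ℝ ℂ).mapMatrix M := rfl
  rw [this, Matrix.isUnit_iff_isUnit_det, Matrix.isUnit_iff_isUnit_det,
    ← RingHom.map_det]
  simp [isUnit_iff_ne_zero]

lemma hurwitzOneSubIsUnitAux {X : Matrix (Fin n) (Fin n) ℝ}
    (hX : ∀ μ ∈ spectrum ℂ (X.map (algebraMap ℝ ℂ)), μ.re < 0) :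
    IsUnit ((1 : Matrix (Fin n) (Fin n) ℝ) - X) := by
  rw [← isUnitMapIffAux]
  by_contra hu
  have h1 : (1 : ℂ) ∈ spectrum ℂ (X.map (algebraMap ℝ ℂ)) := by
    rw [spectrum.mem_iff]
    convert hu using 2
    simp [Matrix.map_sub, Algebra.algebraMap_eq_smul_one]
  exact absurd (hX 1 h1) (by norm_num)

lemma cayleySpectrumAux {X : Matrix (Fin n) (Fin n) ℝ}
    (hX : ∀ μ ∈ spectrum ℂ (X.map (algebraMap ℝ ℂ)), μ.re < 0) :
    ∀ μ ∈ spectrum ℂ ((((1:Matrix (Fin n) (Fin n) ℝ) + X) * ((1:Matrix (Fin n) (Fin n) ℝ) - X)⁻¹).map (algebraMap ℝ ℂ)),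
      ‖μ‖₊ < 1 := by
  intro μ hμ
  set X' : Matrix (Fin n) (Fin n) ℂ := X.map (algebraMap ℝ ℂ) with hX'def
  have hSunit : IsUnit ((1 : Matrix (Fin n) (Fin n) ℝ) - X) := hurwitzOneSubIsUnitAux hX
  have hmapS : ((1:Matrix (Fin n) (Fin n) ℝ) - X).map (algebraMap ℝ ℂ) = 1 - X' := by
    simp [Matrix.map_sub, hX'def]
  have hS'unit : IsUnit ((1 : Matrix (Fin n) (Fin n) ℂ) - X') := by
    rw [← hmapS, isUnitMapIffAux]; exact hSunit
  have hSdet : IsUnit ((1 : Matrix (Fin n) (Fin n) ℂ) - X').det :=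
    (Matrix.isUnit_iff_isUnit_det _).1 hS'unit
  have hmapinv : (((1:Matrix (Fin n) (Fin n) ℝ) - X)⁻¹).map (algebraMap ℝ ℂ)
      = ((1:Matrix (Fin n) (Fin n) ℂ) - X')⁻¹ := by
    symm
    apply Matrix.inv_eq_left_inv
    rw [← hmapS, ← Matrix.map_mul]
    rw [Matrix.nonsing_inv_mul _ ((Matrix.isUnit_iff_isUnit_det _).1 hSunit)]
    simp
  have hmapC : ((((1:Matrix (Fin n) (Fin n) ℝ) + X) * ((1:Matrix (Fin n) (Fin n) ℝ) - X)⁻¹).map (algebraMap ℝ ℂ))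
      = ((1:Matrix (Fin n) (Fin n) ℂ) + X') * ((1:Matrix (Fin n) (Fin n) ℂ) - X')⁻¹ := by
    rw [Matrix.map_mul, hmapinv,
      Matrix.map_add _ (fun a b => map_add (algebraMap ℝ ℂ) a b)]
    simp [hX'def]
  rw [hmapC] at hμ
  rw [spectrum.mem_iff] at hμ
  rw [Matrix.isUnit_iff_isUnit_det, isUnit_iff_ne_zero, not_not,
    ← Matrix.exists_mulVec_eq_zero_iff] at hμ
  obtain ⟨v, hv0, hv⟩ := hμ
  have hCv : (((1:Matrix (Fin n) (Fin n) ℂ) + X') * ((1:Matrix (Fin n) (Fin n) ℂ) - X')⁻¹) *ᵥ v = μ • v := by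
    rw [Matrix.sub_mulVec] at hv
    have h1 : (algebraMap ℂ (Matrix (Fin n) (Fin n) ℂ)) μ *ᵥ v = μ • v := by
      rw [Algebra.algebraMap_eq_smul_one, Matrix.smul_mulVec, Matrix.one_mulVec]
    rw [h1] at hv
    linear_combination (norm := module) -hv
  set w : Fin n → ℂ := ((1:Matrix (Fin n) (Fin n) ℂ) - X')⁻¹ *ᵥ v with hwdef
  have hvw : ((1:Matrix (Fin n) (Fin n) ℂ) - X') *ᵥ w = v := by
    rw [hwdef, Matrix.mulVec_mulVec, Matrix.mul_nonsing_inv _ hSdet, Matrix.one_mulVec]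
  have hw0 : w ≠ 0 := by
    intro h
    rw [h, Matrix.mulVec_zero] at hvw
    exact hv0 hvw.symm
  have key : ((1:Matrix (Fin n) (Fin n) ℂ) + X') *ᵥ w = μ • (((1:Matrix (Fin n) (Fin n) ℂ) - X') *ᵥ w) := by
    rw [hvw, ← hCv, ← Matrix.mulVec_mulVec]
  rw [Matrix.add_mulVec, Matrix.sub_mulVec, Matrix.one_mulVec, smul_sub] at key
  have key2 : (1 + μ) • (X' *ᵥ w) = (μ - 1) • w := by
    linear_combination (norm := module) key
  have hμne : μ ≠ -1 := by
    intro h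
    rw [h] at key2
    norm_num at key2
    exact hw0 key2
  have h1μ : (1 + μ) ≠ 0 := fun h => hμne (by linear_combination h)
  have h1μ' : (μ + 1) ≠ 0 := fun h => h1μ (by linear_combination h)
  set lam : ℂ := (μ - 1) / (μ + 1) with hlam
  have heig : X' *ᵥ w = lam • w := by
    have h3 := congrArg (fun z => (1 + μ)⁻¹ • z) key2
    simp only [smul_smul, inv_mul_cancel₀ h1μ, one_smul] at h3
    rw [h3, hlam, div_eq_mul_inv, mul_comm (μ - 1), add_comm 1 μ]
  have hlamspec : lam ∈ spectrum ℂ X' := by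
    rw [spectrum.mem_iff, Matrix.isUnit_iff_isUnit_det, isUnit_iff_ne_zero, not_not,
      ← Matrix.exists_mulVec_eq_zero_iff]
    refine ⟨w, hw0, ?_⟩
    rw [Matrix.sub_mulVec, heig, Algebra.algebraMap_eq_smul_one, Matrix.smul_mulVec,
      Matrix.one_mulVec, sub_self]
  have hre : lam.re < 0 := hX lam hlamspec
  have hden : ((1:ℂ) - lam) ≠ 0 := by
    intro h
    have h0 : ((1:ℂ) - lam).re = 0 := by rw [h]; simp
    simp [Complex.sub_re, Complex.one_re] at h0
    linarith
  have hmul : μ * (1 - lam) = 1 + lam := by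
    rw [hlam]
    field_simp
    ring
  have hnormmul : ‖μ‖ * ‖(1:ℂ) - lam‖ = ‖(1:ℂ) + lam‖ := by
    rw [← norm_mul, hmul]
  have hsq : ‖(1:ℂ) + lam‖ ^ 2 < ‖(1:ℂ) - lam‖ ^ 2 := by
    have e1 : ‖(1:ℂ) + lam‖ ^ 2 = (1 + lam.re)^2 + lam.im^2 := by
      rw [Complex.sq_norm, Complex.normSq_apply]
      simp [Complex.add_re, Complex.add_im]
      ring
    have e2 : ‖(1:ℂ) - lam‖ ^ 2 = (1 - lam.re)^2 + lam.im^2 := by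
      rw [Complex.sq_norm, Complex.normSq_apply]
      simp [Complex.sub_re, Complex.sub_im]
      ring
    rw [e1, e2]
    nlinarith
  have hlt : ‖(1:ℂ) + lam‖ < ‖(1:ℂ) - lam‖ := by
    nlinarith [norm_nonneg ((1:ℂ) + lam), norm_nonneg ((1:ℂ) - lam)]
  rw [← NNReal.coe_lt_coe]
  push_cast
  rw [← hnormmul] at hlt
  have hpos : (0:ℝ) < ‖(1:ℂ) - lam‖ := by
    rcases (norm_nonneg ((1:ℂ) - lam)).lt_or_eq with h | h
    · exact h
    · exact absurd (norm_eq_zero.mp h.symm) hden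
  exact (mul_lt_iff_lt_one_left hpos).mp hlt

lemma powEntryTendstoAux {n : ℕ} (hn : 0 < n) (C : Matrix (Fin n) (Fin n) ℂ)
    (h : ∀ μ ∈ spectrum ℂ C, ‖μ‖₊ < 1) (i j : Fin n) :
    Tendsto (fun N => ‖(C ^ N) i j‖) atTop (nhds 0) := by
  haveI : Nonempty (Fin n) := ⟨⟨0, hn⟩⟩
  letI : NormedRing (Matrix (Fin n) (Fin n) ℂ) := Matrix.linftyOpNormedRing
  letI : NormedAlgebra ℂ (Matrix (Fin n) (Fin n) ℂ) := Matrix.linftyOpNormedAlgebra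
  letI : @CompleteSpace (Matrix (Fin n) (Fin n) ℂ) PseudoMetricSpace.toUniformSpace := FiniteDimensional.complete ℂ _
  have hne : (spectrum ℂ C).Nonempty := spectrum.nonempty C
  have hρ : spectralRadius ℂ C < (1 : NNReal) :=
    spectrum.spectralRadius_lt_of_forall_lt_of_nonempty hne h
  obtain ⟨r, hr1, hr2⟩ := ENNReal.lt_iff_exists_nnreal_btwn.mp hρ
  have hgel := spectrum.pow_nnnorm_pow_one_div_tendsto_nhds_spectralRadius C
  have hev : ∀ᶠ N : ℕ in atTop, ((‖C ^ N‖₊ : ENNReal) ^ (1 / (N:ℝ))) < (r : ENNReal) :=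
    hgel.eventually_lt_const hr1
  have hevN : ∀ᶠ N in atTop, ‖C ^ N‖ ≤ (r:ℝ) ^ N := by
    filter_upwards [hev, eventually_ge_atTop 1] with N hN hN1
    have hNne : (N:ℝ) ≠ 0 := by positivity
    have : ((‖C ^ N‖₊ : ENNReal) ^ (1/(N:ℝ))) ^ (N:ℝ) ≤ ((r:ENNReal)) ^ (N:ℝ) :=
      ENNReal.rpow_le_rpow hN.le (by positivity)
    rw [← ENNReal.rpow_mul, one_div, inv_mul_cancel₀ hNne, ENNReal.rpow_one,
      ENNReal.rpow_natCast, ← ENNReal.coe_pow, ENNReal.coe_le_coe] at this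
    exact_mod_cast this
  have hC : Tendsto (fun N => ‖C ^ N‖) atTop (nhds 0) := by
    apply squeeze_zero' (Eventually.of_forall fun _ => norm_nonneg _) hevN
    exact tendsto_pow_atTop_nhds_zero_of_lt_one r.coe_nonneg (by exact_mod_cast hr2)
  apply squeeze_zero' (Eventually.of_forall fun _ => norm_nonneg _)
    (Eventually.of_forall fun N => ?_) hC
  -- entry ≤ linfty norm
  calc ‖(C ^ N) i j‖ ≤ ∑ k, ‖(C ^ N) i k‖ := Finset.single_le_sum (f := fun k => ‖(C ^ N) i k‖)
        (fun k _ => norm_nonneg _) (Finset.mem_univ j)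
  _ ≤ ‖C ^ N‖ := by
      rw [Matrix.linfty_opNorm_def]
      calc ∑ k, ‖(C ^ N) i k‖ = ((∑ k, ‖(C ^ N) i k‖₊ : NNReal) : ℝ) := by push_cast; rfl
      _ ≤ _ := NNReal.coe_le_coe.mpr
        (Finset.le_sup (f := fun i => ∑ k, ‖(C ^ N) i k‖₊) (Finset.mem_univ i))

lemma lyapCoreAux {n : ℕ} (hn : 0 < n) (X Y Z : Matrix (Fin n) (Fin n) ℝ)
    (hX : ∀ μ ∈ spectrum ℂ (X.map (algebraMap ℝ ℂ)), μ.re < 0)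
    (heq : Xᵀ * Y + Y * X = -Z) :
    ∃ C W : Matrix (Fin n) (Fin n) ℝ,
      (∀ i j, Tendsto (fun N => ((C ^ N) i j)) atTop (nhds 0)) ∧
      Y = Cᵀ * Y * C + W ∧
      (Z.PosSemidef → W.PosSemidef) ∧
      (Z.PosDef → W.PosDef) ∧
      (Z = 0 → W = 0) := by
  set S : Matrix (Fin n) (Fin n) ℝ := 1 - X with hS
  have hSunit : IsUnit S := hurwitzOneSubIsUnitAux hX
  have hSdet : IsUnit S.det := (Matrix.isUnit_iff_isUnit_det _).1 hSunit
  have hSTdet : IsUnit Sᵀ.det := by rwa [Matrix.det_transpose]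
  set C : Matrix (Fin n) (Fin n) ℝ := (1 + X) * S⁻¹ with hC
  set W : Matrix (Fin n) (Fin n) ℝ := (S⁻¹)ᵀ * (Z + Z) * S⁻¹ with hW
  refine ⟨C, W, ?_, ?_, ?_, ?_, ?_⟩
  · -- entrywise convergence of C ^ N
    intro i j
    have hspec := cayleySpectrumAux (X := X) hX
    have hC' : ∀ N : ℕ, ((C ^ N).map (algebraMap ℝ ℂ)) =
        ((C.map (algebraMap ℝ ℂ)) ^ N) := by
      intro N
      exact map_pow ((algebraMap ℝ ℂ).mapMatrix) C N |>.symm ▸ rfl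
    have hent := powEntryTendstoAux hn (C.map (algebraMap ℝ ℂ)) hspec i j
    refine squeeze_zero_norm (fun N => ?_) hent
    have : ((C.map (algebraMap ℝ ℂ)) ^ N) i j = ((C ^ N) i j : ℂ) := by
      have : (C.map (algebraMap ℝ ℂ)) ^ N = (C ^ N).map (algebraMap ℝ ℂ) :=
        (map_pow ((algebraMap ℝ ℂ).mapMatrix) C N).symm
      rw [this]; rfl
    rw [this, Complex.norm_real]
  · -- the Stein identity
    have hCt : Cᵀ = (Sᵀ)⁻¹ * (1 + Xᵀ) := by
      rw [hC, Matrix.transpose_mul, Matrix.transpose_nonsing_inv, Matrix.transpose_add,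
        Matrix.transpose_one]
    have hZeq : Z = -(Xᵀ * Y + Y * X) := by rw [heq, neg_neg]
    have inner : (1 + Xᵀ) * Y * (1 + X) + (Z + Z) = Sᵀ * Y * S := by
      rw [hZeq, hS, Matrix.transpose_sub, Matrix.transpose_one]
      noncomm_ring
    calc Y = (Sᵀ)⁻¹ * (Sᵀ * Y * S) * S⁻¹ := by
          rw [Matrix.mul_assoc Sᵀ Y S, ← Matrix.mul_assoc Sᵀ⁻¹ Sᵀ (Y * S),
            Matrix.nonsing_inv_mul _ hSTdet, Matrix.one_mul, Matrix.mul_assoc Y S S⁻¹,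
            Matrix.mul_nonsing_inv _ hSdet, Matrix.mul_one]
    _ = Cᵀ * Y * C + W := by
          rw [← inner, hCt, hW, Matrix.transpose_nonsing_inv, hC]
          noncomm_ring
  · intro hZ
    have := (hZ.add hZ).conjTranspose_mul_mul_same (B := S⁻¹)
    rwa [Matrix.conjTranspose_eq_transpose_of_trivial] at this
  · intro hZ
    have h2 : (Z + Z).PosDef := hZ.add_posSemidef hZ.posSemidef
    refine Matrix.PosDef.of_dotProduct_mulVec_pos ?_ ?_
    · have := (hZ.posSemidef.add hZ.posSemidef).conjTranspose_mul_mul_same (B := S⁻¹)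
      rw [Matrix.conjTranspose_eq_transpose_of_trivial] at this
      exact this.isHermitian
    · intro x hx
      have hx' : S⁻¹ *ᵥ x ≠ 0 := by
        intro h0
        have : S *ᵥ (S⁻¹ *ᵥ x) = x := by
          rw [Matrix.mulVec_mulVec, Matrix.mul_nonsing_inv _ hSdet, Matrix.one_mulVec]
        rw [h0, Matrix.mulVec_zero] at this
        exact hx this.symm
      have hq := h2.dotProduct_mulVec_pos hx'
      rw [hW]
      have : (star x) ⬝ᵥ ((S⁻¹ᵀ * (Z + Z) * S⁻¹) *ᵥ x)
          = (star (S⁻¹ *ᵥ x)) ⬝ᵥ ((Z + Z) *ᵥ (S⁻¹ *ᵥ x)) := by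
        rw [star_trivial, star_trivial, ← Matrix.mulVec_mulVec, ← Matrix.mulVec_mulVec,
          Matrix.dotProduct_mulVec x, Matrix.vecMul_transpose]
      rw [this]
      exact hq
  · intro h0
    rw [hW, h0]
    simp

lemma lyapIterAux {n : ℕ} {C Y W : Matrix (Fin n) (Fin n) ℝ}
    (hid : Y = Cᵀ * Y * C + W) (N : ℕ) :
    Y = (C ^ N)ᵀ * Y * (C ^ N) + ∑ k ∈ Finset.range N, (C ^ k)ᵀ * W * (C ^ k) := by
  induction N with
  | zero => simp
  | succ N ih =>
    have step : (C ^ N)ᵀ * Y * (C ^ N)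
        = (C ^ (N+1))ᵀ * Y * (C ^ (N+1)) + (C ^ N)ᵀ * W * (C ^ N) := by
      nth_rewrite 1 [hid]
      rw [pow_succ']
      rw [Matrix.transpose_mul]
      noncomm_ring
    rw [Finset.sum_range_succ]
    nth_rewrite 1 [ih]
    rw [step]
    noncomm_ring

lemma entryTendstoZeroAux {n : ℕ} {C Y : Matrix (Fin n) (Fin n) ℝ}
    (hC : ∀ i j, Tendsto (fun N => ((C ^ N) i j)) atTop (nhds 0)) (a b : Fin n) :
    Tendsto (fun N => (((C ^ N)ᵀ * Y * (C ^ N) : Matrix (Fin n) (Fin n) ℝ)) a b)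
      atTop (nhds 0) := by
  have key : ∀ N, (((C ^ N)ᵀ * Y * (C ^ N) : Matrix (Fin n) (Fin n) ℝ)) a b
      = ∑ j, (∑ i, (C ^ N) i a * Y i j) * (C ^ N) j b := by
    intro N
    simp only [Matrix.mul_apply, Matrix.transpose_apply, Finset.sum_mul]
  simp only [key]
  have h0 : (0:ℝ) = ∑ j : Fin n, (0:ℝ) := by simp
  rw [h0]
  apply tendsto_finset_sum
  intro j _
  have hsum : Tendsto (fun N => ∑ i, (C ^ N) i a * Y i j) atTop (nhds 0) := by
    have h0' : (0:ℝ) = ∑ i : Fin n, (0:ℝ) := by simp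
    rw [h0']
    apply tendsto_finset_sum
    intro i _
    simpa using (hC i a).mul_const (Y i j)
  simpa using hsum.mul (hC j b)

lemma lyapZeroAux {n : ℕ} (hn : 0 < n) {X Y : Matrix (Fin n) (Fin n) ℝ}
    (hX : ∀ μ ∈ spectrum ℂ (X.map (algebraMap ℝ ℂ)), μ.re < 0)
    (heq : Xᵀ * Y + Y * X = 0) : Y = 0 := by
  obtain ⟨C, W, hCt, hid, _, _, hW0⟩ := lyapCoreAux hn X Y 0 hX (by rw [heq, neg_zero])
  rw [hW0 rfl, add_zero] at hid
  have hiter := lyapIterAux (W := 0) (by simpa using hid)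
  ext a b
  have hconst : Tendsto (fun N => (((C ^ N)ᵀ * Y * (C ^ N) : Matrix (Fin n) (Fin n) ℝ)) a b)
      atTop (nhds (Y a b)) := by
    have he : ∀ N, (((C ^ N)ᵀ * Y * (C ^ N) : Matrix (Fin n) (Fin n) ℝ)) a b = Y a b := by
      intro N
      conv_rhs => rw [hiter N]
      simp
    simp only [he]
    exact tendsto_const_nhds
  have hzero := entryTendstoZeroAux (Y := Y) hCt a b
  have := tendsto_nhds_unique hconst hzero
  simpa using this

lemma quadStepAux {n : ℕ} {C Y W : Matrix (Fin n) (Fin n) ℝ}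
    (hid : Y = Cᵀ * Y * C + W) (u : Fin n → ℝ) :
    u ⬝ᵥ (Y *ᵥ u) = (C *ᵥ u) ⬝ᵥ (Y *ᵥ (C *ᵥ u)) + u ⬝ᵥ (W *ᵥ u) := by
  nth_rewrite 1 [hid]
  rw [Matrix.add_mulVec, dotProduct_add]
  congr 1
  rw [← Matrix.mulVec_mulVec, ← Matrix.mulVec_mulVec,
    Matrix.dotProduct_mulVec u Cᵀ, Matrix.vecMul_transpose]

lemma lyapPSDAux {n : ℕ} (hn : 0 < n) {X Y Z : Matrix (Fin n) (Fin n) ℝ}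
    (hX : ∀ μ ∈ spectrum ℂ (X.map (algebraMap ℝ ℂ)), μ.re < 0)
    (hY : Y.IsHermitian) (hZ : Z.PosSemidef)
    (heq : Xᵀ * Y + Y * X = -Z) : Y.PosSemidef := by
  obtain ⟨C, W, hCt, hid, hWpsd, _, _⟩ := lyapCoreAux hn X Y Z hX heq
  have hW := hWpsd hZ
  refine Matrix.PosSemidef.of_dotProduct_mulVec_nonneg hY fun v => ?_
  rw [star_trivial]
  set q : ℕ → ℝ := fun N => (C ^ N *ᵥ v) ⬝ᵥ (Y *ᵥ (C ^ N *ᵥ v)) with hq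
  have hstep : ∀ N, q (N + 1) ≤ q N := by
    intro N
    have := quadStepAux hid (C ^ N *ᵥ v)
    have hw := hW.dotProduct_mulVec_nonneg (C ^ N *ᵥ v)
    rw [star_trivial] at hw
    have hrw : C *ᵥ (C ^ N *ᵥ v) = C ^ (N + 1) *ᵥ v := by
      rw [Matrix.mulVec_mulVec, ← pow_succ']
    rw [hrw] at this
    simp only [hq]
    linarith
  have hmono : ∀ N, q N ≤ q 0 := by
    intro N
    induction N with
    | zero => exact le_refl _
    | succ N ih => exact le_trans (hstep N) ih
  have hlim : Tendsto q atTop (nhds 0) := by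
    have hqe : q = fun N => ∑ i, (C ^ N *ᵥ v) i * (Y *ᵥ (C ^ N *ᵥ v)) i := by
      funext N; simp [hq, dotProduct]
    rw [hqe]
    have h0 : (0:ℝ) = ∑ i : Fin n, (0:ℝ) := by simp
    rw [h0]
    apply tendsto_finset_sum
    intro i _
    have hvec : ∀ a : Fin n, Tendsto (fun N => (C ^ N *ᵥ v) a) atTop (nhds 0) := by
      intro a
      have : ∀ N, (C ^ N *ᵥ v) a = ∑ k, (C ^ N) a k * v k := by
        intro N; simp [Matrix.mulVec, dotProduct]
      simp only [this]
      have h0' : (0:ℝ) = ∑ k : Fin n, (0:ℝ) := by simp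
      rw [h0']
      apply tendsto_finset_sum
      intro k _
      simpa using (hCt a k).mul_const (v k)
    have hyv : Tendsto (fun N => (Y *ᵥ (C ^ N *ᵥ v)) i) atTop (nhds 0) := by
      have : ∀ N, (Y *ᵥ (C ^ N *ᵥ v)) i = ∑ j, Y i j * (C ^ N *ᵥ v) j := by
        intro N; simp [Matrix.mulVec, dotProduct]
      simp only [this]
      have h0' : (0:ℝ) = ∑ j : Fin n, (0:ℝ) := by simp
      rw [h0']
      apply tendsto_finset_sum
      intro j _
      simpa using ((hvec j).const_mul (Y i j))
    simpa using (hvec i).mul hyv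
  have : (0:ℝ) ≤ q 0 := le_of_tendsto hlim (Eventually.of_forall hmono)
  simpa [hq] using this

lemma lyapPDAux {n : ℕ} (hn : 0 < n) {X Y Z : Matrix (Fin n) (Fin n) ℝ}
    (hX : ∀ μ ∈ spectrum ℂ (X.map (algebraMap ℝ ℂ)), μ.re < 0)
    (hY : Y.IsHermitian) (hZ : Z.PosDef)
    (heq : Xᵀ * Y + Y * X = -Z) : Y.PosDef := by
  have hpsd := lyapPSDAux hn hX hY hZ.posSemidef heq
  obtain ⟨C, W, hCt, hid, _, hWpd, _⟩ := lyapCoreAux hn X Y Z hX heq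
  have hW := hWpd hZ
  refine Matrix.PosDef.of_dotProduct_mulVec_pos hY fun v hv => ?_
  rw [star_trivial]
  have hstep := quadStepAux hid v
  have h1 : (0:ℝ) ≤ (C *ᵥ v) ⬝ᵥ (Y *ᵥ (C *ᵥ v)) := by
    have := hpsd.dotProduct_mulVec_nonneg (C *ᵥ v)
    rwa [star_trivial] at this
  have h2 : (0:ℝ) < v ⬝ᵥ (W *ᵥ v) := by
    have := hW.dotProduct_mulVec_pos hv
    rwa [star_trivial] at this
  linarith

lemma psdTraceNonnegAux {n : ℕ} {M : Matrix (Fin n) (Fin n) ℝ} (hM : M.PosSemidef) :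
    0 ≤ M.trace := by
  rw [Matrix.trace]
  apply Finset.sum_nonneg
  intro i _
  have := hM.dotProduct_mulVec_nonneg (Pi.single i 1)
  rw [star_trivial] at this
  simpa [dotProduct, Matrix.mulVec, Pi.single_apply, Finset.sum_ite_eq,
    Matrix.diag] using this

open scoped MatrixOrder in
lemma traceMulNonnegAux {n : ℕ} {A B : Matrix (Fin n) (Fin n) ℝ}
    (hA : A.PosSemidef) (hB : B.PosSemidef) : 0 ≤ (A * B).trace := by
  obtain ⟨s, hsherm, hss⟩ : ∃ s : Matrix (Fin n) (Fin n) ℝ, sᴴ = s ∧ s * s = A :=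
    ⟨CFC.sqrt A, (CFC.sqrt_nonneg A).posSemidef.isHermitian, CFC.sqrt_mul_sqrt_self A hA.nonneg⟩
  rw [← hss, Matrix.mul_assoc, Matrix.trace_mul_comm]
  apply psdTraceNonnegAux
  have := hB.conjTranspose_mul_mul_same (B := s)
  rwa [hsherm] at this

lemma frobSqEqTraceAux {n : ℕ} (X : Matrix (Fin n) (Fin n) ℝ) :
    ∑ i, ∑ j, (X i j) ^ 2 = (Xᵀ * X).trace := by
  rw [Matrix.trace]
  rw [Finset.sum_comm]
  apply Finset.sum_congr rfl
  intro j _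
  simp [Matrix.mul_apply, Matrix.diag, sq]

theorem mainHelperAux
    (n m : ℕ) (hn : 0 < n) (hm : 0 < m)
    (A : Matrix (Fin n) (Fin n) ℝ) (B : Matrix (Fin n) (Fin m) ℝ)
    (Q : Matrix (Fin n) (Fin n) ℝ) (R : Matrix (Fin m) (Fin m) ℝ)
    (hQ : Q.PosSemidef) (hR : R.PosDef)
    (hQ1 : (Q - 1).PosSemidef)
    (K : Matrix (Fin m) (Fin n) ℝ)
    (P : Matrix (Fin n) (Fin n) ℝ) (hP : P.IsSymm)
    (hPE : (A - B * K)ᵀ * P + P * (A - B * K) + Q + Kᵀ * R * K = 0)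
    (hHur : ∀ μ ∈ spectrum ℂ ((A - B * R⁻¹ * Bᵀ * P).map (algebraMap ℝ ℂ)), μ.re < 0)
    (H : Matrix (Fin n) (Fin n) ℝ)
    (hH : (A - B * R⁻¹ * Bᵀ * P)ᵀ * H + H * (A - B * R⁻¹ * Bᵀ * P)
        = -(1 : Matrix (Fin n) (Fin n) ℝ)) :
    H.PosDef ∧ (P - H).PosSemidef ∧
      Real.sqrt (∑ i, ∑ j, (H i j) ^ 2) ≤ Real.sqrt (∑ i, ∑ j, (P i j) ^ 2) := by
  set X : Matrix (Fin n) (Fin n) ℝ := A - B * R⁻¹ * Bᵀ * P with hXdef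
  have hRdet : IsUnit R.det := (Matrix.isUnit_iff_isUnit_det _).1 hR.isUnit
  have hRsym : Rᵀ = R := by
    have h : Rᴴ = R := hR.isHermitian
    rwa [Matrix.conjTranspose_eq_transpose_of_trivial] at h
  have hRinvsym : R⁻¹ᵀ = R⁻¹ := by rw [Matrix.transpose_nonsing_inv, hRsym]
  -- symmetry of H
  have hHt : Xᵀ * Hᵀ + Hᵀ * X = -(1 : Matrix (Fin n) (Fin n) ℝ) := by
    have := congrArg Matrix.transpose hH
    rw [Matrix.transpose_add, Matrix.transpose_mul, Matrix.transpose_mul,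
      Matrix.transpose_transpose, Matrix.transpose_neg, Matrix.transpose_one] at this
    rw [← this]
    abel
  have hHsym : Hᵀ = H := by
    have hΔ : Xᵀ * (H - Hᵀ) + (H - Hᵀ) * X
        = (Xᵀ * H + H * X) - (Xᵀ * Hᵀ + Hᵀ * X) := by noncomm_ring
    rw [hH, hHt, sub_self] at hΔ
    have := lyapZeroAux hn hHur hΔ
    rw [sub_eq_zero] at this
    exact this.symm
  have hHherm : H.IsHermitian := by
    rw [Matrix.IsHermitian, Matrix.conjTranspose_eq_transpose_of_trivial]
    exact hHsym
  -- H positive definite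
  have hHpd : H.PosDef := lyapPDAux hn hHur hHherm Matrix.PosDef.one hH
  -- gain matrix and completed square
  set G : Matrix (Fin m) (Fin n) ℝ := R⁻¹ * Bᵀ * P with hGdef
  set M : Matrix (Fin n) (Fin n) ℝ := Q + (K - G)ᵀ * R * (K - G) + Gᵀ * R * G with hMdef
  have hc1 : ∀ T : Matrix (Fin m) (Fin n) ℝ, R * (R⁻¹ * T) = T := fun T => by
    rw [← Matrix.mul_assoc, Matrix.mul_nonsing_inv _ hRdet, Matrix.one_mul]
  have hc2 : ∀ T : Matrix (Fin m) (Fin n) ℝ, R⁻¹ * (R * T) = T := fun T => by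
    rw [← Matrix.mul_assoc, Matrix.nonsing_inv_mul _ hRdet, Matrix.one_mul]
  have hid : Xᵀ * P + P * X + M
      = (A - B * K)ᵀ * P + P * (A - B * K) + Q + Kᵀ * R * K := by
    rw [hXdef, hMdef, hGdef]
    simp only [Matrix.transpose_sub, Matrix.transpose_mul, Matrix.transpose_transpose,
      hP.eq, hRsym, hRinvsym, Matrix.sub_mul, Matrix.mul_sub, Matrix.add_mul, Matrix.mul_add,
      Matrix.mul_assoc, hc1, hc2]
    abel
  rw [hPE] at hid
  have keyP : Xᵀ * P + P * X = -M := by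
    have := hid
    rwa [add_eq_zero_iff_eq_neg] at this
  have keyPH : Xᵀ * (P - H) + (P - H) * X = -(M - 1) := by
    have e : Xᵀ * (P - H) + (P - H) * X
        = (Xᵀ * P + P * X) - (Xᵀ * H + H * X) := by noncomm_ring
    rw [e, keyP, hH]
    abel
  have hM1 : (M - 1).PosSemidef := by
    have h1 : ((K - G)ᵀ * R * (K - G)).PosSemidef := by
      have := hR.posSemidef.conjTranspose_mul_mul_same (B := K - G)
      rwa [Matrix.conjTranspose_eq_transpose_of_trivial] at this
    have h2 : (Gᵀ * R * G).PosSemidef := by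
      have := hR.posSemidef.conjTranspose_mul_mul_same (B := G)
      rwa [Matrix.conjTranspose_eq_transpose_of_trivial] at this
    have e : M - 1 = ((Q - 1) + (K - G)ᵀ * R * (K - G)) + Gᵀ * R * G := by
      rw [hMdef]; abel
    rw [e]
    exact (hQ1.add h1).add h2
  have hPHherm : (P - H).IsHermitian := by
    rw [Matrix.IsHermitian, Matrix.conjTranspose_eq_transpose_of_trivial,
      Matrix.transpose_sub, hP.eq, hHsym]
  have hPHpsd : (P - H).PosSemidef := lyapPSDAux hn hHur hPHherm hM1 keyPH
  refine ⟨hHpd, hPHpsd, ?_⟩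
  -- Frobenius norm comparison
  have hHpsd := hHpd.posSemidef
  have hPpsd : P.PosSemidef := by
    have := hPHpsd.add hHpsd
    rwa [sub_add_cancel] at this
  have tr1 : 0 ≤ ((P - H) * P).trace := traceMulNonnegAux hPHpsd hPpsd
  have tr2 : 0 ≤ (H * (P - H)).trace := traceMulNonnegAux hHpsd hPHpsd
  have e : ((P - H) * P).trace + (H * (P - H)).trace
      = (P * P).trace - (H * H).trace := by
    rw [Matrix.sub_mul, Matrix.mul_sub, Matrix.trace_sub, Matrix.trace_sub,
      Matrix.trace_mul_comm H P]
    abel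
  have htr : (H * H).trace ≤ (P * P).trace := by linarith
  apply Real.sqrt_le_sqrt
  rw [frobSqEqTraceAux, frobSqEqTraceAux, hHsym, hP.eq]
  exact htr

/-- if `Q ≥ Iₙ`, the solution `H` of `𝒜(P)ᵀH + H𝒜(P) = -Iₙ` is positive
definite and dominated by the policy-evaluation solution `P`; in particular
`‖H‖_F ≤ ‖P‖_F`. -/
theorem lyapunov_identity_solution_dominated
    (n m : ℕ) (hn : 0 < n) (hm : 0 < m)
    (A : Matrix (Fin n) (Fin n) ℝ) (B : Matrix (Fin n) (Fin m) ℝ)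
    (Q : Matrix (Fin n) (Fin n) ℝ) (R : Matrix (Fin m) (Fin m) ℝ)
    (hQ : Q.PosSemidef) (hR : R.PosDef)
    (hQ1 : (Q - 1).PosSemidef)
    (K : Matrix (Fin m) (Fin n) ℝ) (hK : IsHurwitz (A - B * K))
    (P : Matrix (Fin n) (Fin n) ℝ) (hP : P.IsSymm)
    (hPE : (A - B * K)ᵀ * P + P * (A - B * K) + Q + Kᵀ * R * K = 0)
    (hHur : IsHurwitz (A - B * R⁻¹ * Bᵀ * P))
    (H : Matrix (Fin n) (Fin n) ℝ)
    (hH : (A - B * R⁻¹ * Bᵀ * P)ᵀ * H + H * (A - B * R⁻¹ * Bᵀ * P)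
        = -(1 : Matrix (Fin n) (Fin n) ℝ)) :
    H.PosDef ∧ (P - H).PosSemidef ∧ frobNorm H ≤ frobNorm P := by
  have hHur' : ∀ μ ∈ spectrum ℂ ((A - B * R⁻¹ * Bᵀ * P).map (algebraMap ℝ ℂ)), μ.re < 0 := hHur
  obtain ⟨h1, h2, h3⟩ := mainHelperAux n m hn hm A B Q R hQ hR hQ1 K P hP hPE hHur' H hH
  exact ⟨h1, h2, h3⟩
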